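/- For every n ≥ 1, SSCS(n) = SCS(n) - ∑_{i=1}^{⌊n/2⌋} SS(i)·SCS(n-2i), where the conventions SCS(0) = 1 and SCS(1) = 1 are used. -/

import Mathlib

/-- A score sequence of length `n`: nondecreasing, partial sums `≥ C(r,2)` for `1 ≤ r < n`,
and total sum `C(n,2)`. -/
def IsScoreSeq (l : List ℕ) : Prop :=
  l.Pairwise (· ≤ ·) ∧
  (∀ r, 1 ≤ r → r < l.length → r.choose 2 ≤ (l.take r).sum) ∧
  l.sum = l.length.choose 2

/-- A sequence of length `n` is self-complementary if `s_{n+1-i} = n-1-s_i`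
for all `1 ≤ i ≤ ⌊n/2⌋` (here `l.getD (i-1) 0` is the `i`-th term `s_i`). -/
def IsSelfCompl (l : List ℕ) : Prop :=
  ∀ i, 1 ≤ i → i ≤ l.length / 2 →
    ((l.getD (l.length - i) 0 : ℤ)) = (l.length : ℤ) - 1 - (l.getD (i - 1) 0 : ℤ)

/-- A strong score sequence of length `n`: nondecreasing, partial sums `> C(r,2)` for
`1 ≤ r < n`, and total sum `C(n,2)`. -/
def IsStrongScoreSeq (l : List ℕ) : Prop :=
  l.Pairwise (· ≤ ·) ∧
  (∀ r, 1 ≤ r → r < l.length → r.choose 2 < (l.take r).sum) ∧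
  l.sum = l.length.choose 2

namespace SSCSAux

lemma choose_two_add (i t : ℕ) : (i + t).choose 2 = i.choose 2 + t.choose 2 + i * t := by
  induction t with
  | zero => simp
  | succ t ih =>
    have h1 : i + (t + 1) = (i + t) + 1 := by ring
    have h2 : (i + t + 1).choose 2 = (i + t).choose 1 + (i + t).choose 2 :=
      Nat.choose_succ_succ _ _
    have h3 : (t + 1).choose 2 = t.choose 1 + t.choose 2 := Nat.choose_succ_succ _ _
    simp [Nat.choose_one_right] at h2 h3
    rw [h1, h2, ih, h3]; ring

lemma two_mul_choose_two (s : ℕ) : 2 * s.choose 2 + s = s * s := by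
  induction s with
  | zero => simp
  | succ s ih =>
    have h : (s + 1).choose 2 = s.choose 1 + s.choose 2 := Nat.choose_succ_succ _ _
    simp [Nat.choose_one_right] at h
    rw [h]; nlinarith

lemma sum_map_add_nat (m : List ℕ) (i : ℕ) :
    (m.map (· + i)).sum = m.sum + m.length * i := by
  induction m with
  | nil => simp
  | cons x t ih => simp [ih]; ring

lemma sum_map_sub_nat {a : List ℕ} {c : ℕ} (h : ∀ x ∈ a, x ≤ c) :
    (a.map (fun x => c - x)).sum + a.sum = a.length * c := by
  induction a with
  | nil => simp
  | cons x t ih =>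
    have hx : x ≤ c := h x (by simp)
    have ih' := ih (fun y hy => h y (by simp [hy]))
    simp only [List.map_cons, List.sum_cons, List.length_cons]
    rw [Nat.succ_mul]
    omega

lemma sum_map_sub_nat' {a : List ℕ} {c : ℕ} (h : ∀ x ∈ a, c ≤ x) :
    (a.map (fun x => x - c)).sum + a.length * c = a.sum := by
  induction a with
  | nil => simp
  | cons x t ih =>
    have hx : c ≤ x := h x (by simp)
    have ih' := ih (fun y hy => h y (by simp [hy]))
    simp only [List.map_cons, List.sum_cons, List.length_cons]
    rw [Nat.succ_mul]
    omega

lemma strong_isScore {l : List ℕ} (h : IsStrongScoreSeq l) : IsScoreSeq l :=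
  ⟨h.1, fun r h1 h2 => le_of_lt (h.2.1 r h1 h2), h.2.2⟩

lemma entry_lt {l : List ℕ} (h : IsScoreSeq l) {x : ℕ} (hx : x ∈ l) : x < l.length := by
  obtain ⟨hsort, hpart, hsum⟩ := h
  have hne : l ≠ [] := by rintro rfl; simp at hx
  set g := l.getLast hne with hg
  have hd : l.dropLast ++ [g] = l := List.dropLast_append_getLast hne
  have hlen : 1 ≤ l.length := List.length_pos_iff.2 hne
  have hsum2 : l.dropLast.sum + g = l.sum := by
    conv_rhs => rw [← hd]
    simp
  have hxg : x ≤ g := by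
    rcases (List.mem_append.1 (hd ▸ hx)) with h1 | h1
    · have := (List.pairwise_append.1 (hd ▸ hsort)).2.2 x h1 g (by simp)
      exact this
    · simp at h1; omega
  have hdl : (l.length - 1).choose 2 ≤ l.dropLast.sum := by
    rcases Nat.eq_or_lt_of_le hlen with h1 | h1
    · have : l.length - 1 = 0 := by omega
      simp [this]
    · rw [List.dropLast_eq_take]
      exact hpart (l.length - 1) (by omega) (by omega)
  have hch := choose_two_add (l.length - 1) 1
  have h1 : l.length - 1 + 1 = l.length := by omega
  rw [h1] at hch
  simp [Nat.choose_one_right] at hch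
  omega

lemma getD_lt {l : List ℕ} (h : IsScoreSeq l) {p : ℕ} (hp : p < l.length) :
    l.getD p 0 < l.length := by
  rw [List.getD_eq_getElem l 0 hp]
  exact entry_lt h (List.getElem_mem _)

lemma sorted_getD_le {l : List ℕ} (h : l.Pairwise (· ≤ ·)) {p q : ℕ} (hpq : p ≤ q)
    (hq : q < l.length) : l.getD p 0 ≤ l.getD q 0 := by
  rw [List.getD_eq_getElem l 0 (lt_of_le_of_lt hpq hq), List.getD_eq_getElem l 0 hq]
  rcases Nat.eq_or_lt_of_le hpq with h1 | h1
  · subst h1; rfl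
  · exact List.pairwise_iff_getElem.1 h _ _ _ _ h1


lemma getElem_idx_eq (l : List ℕ) {p q : ℕ} (h : p = q) (hp : p < l.length) :
    l[p] = l[q]'(h ▸ hp) := by subst h; rfl

-- part b: compBlock and the reflection lemma
def compBlock (n : ℕ) (a : List ℕ) : List ℕ := (a.map (fun x => n - 1 - x)).reverse

lemma compBlock_length (n : ℕ) (a : List ℕ) : (compBlock n a).length = a.length := by
  simp [compBlock]

lemma compBlock_sum {n : ℕ} {a : List ℕ} (h : ∀ x ∈ a, x ≤ n - 1) :
    (compBlock n a).sum + a.sum = a.length * (n - 1) := by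
  rw [compBlock, List.sum_reverse]
  exact sum_map_sub_nat h

lemma drop_compBlock {l : List ℕ} (hsc : IsScoreSeq l) (hcl : IsSelfCompl l) {t : ℕ}
    (ht : t ≤ l.length / 2) :
    l.drop (l.length - t) = compBlock l.length (l.take t) := by
  have htn : t ≤ l.length := le_trans ht (Nat.div_le_self _ _)
  apply List.ext_getElem
  · simp [compBlock]; omega
  · intro j hj1 hj2
    simp only [List.length_drop] at hj1
    have hjt : j < t := by omega
    have hcl' := hcl (t - j) (by omega) (by omega)
    have hi1 : l.length - (t - j) < l.length := by omega
    have hi2 : t - j - 1 < l.length := by omega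
    rw [List.getD_eq_getElem l 0 hi1, List.getD_eq_getElem l 0 hi2] at hcl'
    have hb : l[t - j - 1] < l.length := entry_lt hsc (List.getElem_mem _)
    have e1 : l.length - t + j = l.length - (t - j) := by omega
    have lhs_eq : (l.drop (l.length - t))[j] = l[l.length - (t - j)] := by
      rw [List.getElem_drop]
      congr 1
    simp only [compBlock, List.getElem_reverse, List.getElem_map, List.getElem_take]
    rw [lhs_eq]
    have e2 : (l.take t).length - 1 - j = t - j - 1 := by
      rw [List.length_take]; omega
    have e3 : (List.map (fun x => l.length - 1 - x) (l.take t)).length - 1 - j = t - j - 1 := by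
      simp; omega
    rw [getElem_idx_eq l e3]
    omega

-- part c: sum corollary, finiteness, ncard tools
lemma sum_take_compl {l : List ℕ} (hsc : IsScoreSeq l) (hcl : IsSelfCompl l) {t : ℕ}
    (ht : t ≤ l.length / 2) :
    (l.take (l.length - t)).sum + t * (l.length - 1) = l.sum + (l.take t).sum := by
  have htn : t ≤ l.length := le_trans ht (Nat.div_le_self _ _)
  have h := drop_compBlock hsc hcl ht
  have h2 := List.sum_take_add_sum_drop l (l.length - t)
  rw [h] at h2
  have h3 : (compBlock l.length (l.take t)).sum + (l.take t).sum
      = (l.take t).length * (l.length - 1) :=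
    compBlock_sum (fun x hx => by
      have := entry_lt hsc ((l.take_sublist t).mem hx); omega)
  have h4 : (l.take t).length = t := by simp; omega
  rw [h4] at h3
  omega

lemma finite_len_lt (nn b : ℕ) : {l : List ℕ | l.length = nn ∧ ∀ x ∈ l, x < b}.Finite := by
  induction nn with
  | zero =>
    apply Set.Finite.subset (Set.finite_singleton ([] : List ℕ))
    rintro l ⟨h1, -⟩
    simp [List.length_eq_zero_iff.1 h1]
  | succ nn ih =>
    apply Set.Finite.subset (((Set.finite_Iio b).prod ih).image (fun p => p.1 :: p.2))
    rintro l ⟨h1, h2⟩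
    rcases l with - | ⟨x, t⟩
    · simp at h1
    · refine ⟨(x, t), ⟨?_, ?_, ?_⟩, rfl⟩
      · exact h2 x (by simp)
      · simpa using h1
      · exact fun y hy => h2 y (by simp [hy])

lemma finite_score (nn : ℕ) : {l : List ℕ | l.length = nn ∧ IsScoreSeq l}.Finite := by
  apply (finite_len_lt nn nn).subset
  rintro l ⟨h1, h2⟩
  exact ⟨h1, fun x hx => h1 ▸ entry_lt h2 hx⟩

lemma ncard_prod {α β : Type*} {s : Set α} {t : Set β} (hs : s.Finite) (ht : t.Finite) :
    (s ×ˢ t).ncard = s.ncard * t.ncard := by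
  rw [Set.ncard_eq_toFinset_card _ (hs.prod ht), Set.ncard_eq_toFinset_card _ hs,
    Set.ncard_eq_toFinset_card _ ht, ← Finset.card_product]
  congr 1
  ext p
  simp

lemma ncard_biUnion {ι α : Type*} (u : Finset ι) (f : ι → Set α)
    (hf : ∀ i ∈ u, (f i).Finite)
    (hd : ∀ i ∈ u, ∀ j ∈ u, i ≠ j → Disjoint (f i) (f j)) :
    (⋃ i ∈ u, f i).ncard = ∑ i ∈ u, (f i).ncard := by
  classical
  induction u using Finset.cons_induction with
  | empty => simp
  | cons a u ha ih =>
    have h1 : (⋃ i ∈ Finset.cons a u ha, f i) = f a ∪ ⋃ i ∈ u, f i := by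
      simp [Set.iUnion_or, Set.iUnion_union_distrib]
    rw [h1, Finset.sum_cons]
    have hfin2 : (⋃ i ∈ u, f i).Finite :=
      Set.Finite.biUnion u.finite_toSet (fun i hi => hf i (Finset.mem_cons_of_mem hi))
    rw [Set.ncard_union_eq ?_ (hf a (Finset.mem_cons_self a u)) hfin2]
    · rw [ih (fun i hi => hf i (Finset.mem_cons_of_mem hi))
        (fun i hi j hj hij => hd i (Finset.mem_cons_of_mem hi) j (Finset.mem_cons_of_mem hj) hij)]
    · rw [Set.disjoint_iUnion_right]
      intro i
      rw [Set.disjoint_iUnion_right]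
      intro hi
      exact hd a (Finset.mem_cons_self a u) i (Finset.mem_cons_of_mem hi)
        (by rintro rfl; exact ha hi)

-- part d: arithmetic lemmas
lemma arith_case3 (s u k w cs q P au : ℕ)
    (p1 : cs + q = P) (p2 : q + au = u * w) (p3 : P + (s + u).choose 2 = (s + u) * w)
    (p4 : u.choose 2 ≤ au) (hw : w + 1 = 2 * (s + u) + k) :
    ((s + u) + k + s).choose 2 ≤ (s + u).choose 2 + (k.choose 2 + k * (s + u)) + cs := by
  have c1 := choose_two_add (s + u + k) s
  have c2 := choose_two_add (s + u) k
  have c3 := choose_two_add s u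
  have c4 := two_mul_choose_two s
  nlinarith [c1, c2, c3, c4]

lemma arith_total (i k w cs : ℕ) (hw : w + 1 = 2 * i + k) (p : cs + i.choose 2 = i * w) :
    i.choose 2 + (k.choose 2 + k * i) + cs = (2 * i + k).choose 2 := by
  have c1 : (2 * i + k) = (i + k) + i := by ring
  rw [c1]
  have c2 := choose_two_add (i + k) i
  have c3 := choose_two_add i k
  have c4 := two_mul_choose_two i
  nlinarith [c2, c3, c4]

lemma getD_append3_left {a mm c : List ℕ} {p : ℕ} (hp : p < a.length) :
    (a ++ mm ++ c).getD p 0 = a.getD p 0 := by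
  have h1 : p < (a ++ mm ++ c).length := by simp; omega
  have h2 : p < (a ++ mm).length := by simp; omega
  rw [List.getD_eq_getElem _ 0 h1, List.getD_eq_getElem _ 0 hp,
    List.getElem_append_left h2, List.getElem_append_left hp]

lemma getD_append3_mid {a mm c : List ℕ} {p : ℕ} (hp : p < mm.length) :
    (a ++ mm ++ c).getD (a.length + p) 0 = mm.getD p 0 := by
  have h1 : a.length + p < (a ++ mm ++ c).length := by simp; omega
  have h2 : a.length + p < (a ++ mm).length := by simp; omega
  have h3 : a.length ≤ a.length + p := by omega
  rw [List.getD_eq_getElem _ 0 h1, List.getD_eq_getElem _ 0 hp,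
    List.getElem_append_left h2, List.getElem_append_right h3]
  exact getElem_idx_eq mm (show a.length + p - a.length = p by omega) (by omega)

lemma getD_append3_right {a mm c : List ℕ} {p : ℕ} (hp : p < c.length) :
    (a ++ mm ++ c).getD (a.length + mm.length + p) 0 = c.getD p 0 := by
  have h1 : a.length + mm.length + p < (a ++ mm ++ c).length := by simp; omega
  have h2 : (a ++ mm).length ≤ a.length + mm.length + p := by simp
  rw [List.getD_eq_getElem _ 0 h1, List.getD_eq_getElem _ 0 hp,
    List.getElem_append_right h2]
  exact getElem_idx_eq c (show a.length + mm.length + p - (a ++ mm).length = p by simp) (by simp; omega)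

lemma getD_map_add {m : List ℕ} {i p : ℕ} (hp : p < m.length) :
    (m.map (· + i)).getD p 0 = m.getD p 0 + i := by
  have h1 : p < (m.map (· + i)).length := by simp; omega
  rw [List.getD_eq_getElem _ 0 h1, List.getD_eq_getElem _ 0 hp]
  simp

lemma compBlock_getD {n : ℕ} {a : List ℕ} {p : ℕ} (hp : p < a.length) :
    (compBlock n a).getD p 0 = n - 1 - a.getD (a.length - 1 - p) 0 := by
  have h1 : p < (compBlock n a).length := by rw [compBlock_length]; omega
  rw [List.getD_eq_getElem _ 0 h1, List.getD_eq_getElem _ 0 (by omega : a.length - 1 - p < a.length)]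
  simp only [compBlock]
  simp only [List.getElem_reverse]
  simp only [List.getElem_map, List.length_map]

-- part e: glue and its properties
def glue (n i : ℕ) (p : List ℕ × List ℕ) : List ℕ :=
  p.1 ++ p.2.map (· + i) ++ compBlock n p.1

set_option maxHeartbeats 2000000 in
lemma glue_spec {n i : ℕ} {a m : List ℕ} (h1 : 1 ≤ i) (h2 : 2 * i ≤ n)
    (ha : a.length = i) (hsa : IsStrongScoreSeq a)
    (hm : m.length = n - 2 * i) (hsm : IsScoreSeq m) (hcm : IsSelfCompl m) :
    (glue n i (a, m)).length = n ∧ IsScoreSeq (glue n i (a, m)) ∧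
    IsSelfCompl (glue n i (a, m)) ∧
    ((glue n i (a, m)).take i).sum = i.choose 2 ∧
    (∀ r, 1 ≤ r → r < i → r.choose 2 < ((glue n i (a, m)).take r).sum) := by
  obtain ⟨k, hk⟩ : ∃ k, n = 2 * i + k := ⟨n - 2 * i, by omega⟩
  have hm' : m.length = k := by omega
  have hw : (n - 1) + 1 = 2 * i + k := by omega
  set mm := m.map (· + i) with hmmdef
  set c := compBlock n a with hcdef
  have hglue : glue n i (a, m) = a ++ mm ++ c := rfl
  have hmm_len : mm.length = k := by simp [hmmdef, hm']
  have hc_len : c.length = i := by rw [hcdef, compBlock_length, ha]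
  have hg_len : (a ++ mm ++ c).length = n := by simp [ha, hmm_len, hc_len]; omega
  -- entry bounds
  have haE : ∀ x ∈ a, x < i := fun x hx => ha ▸ entry_lt (strong_isScore hsa) hx
  have hmE : ∀ x ∈ m, x < k := fun x hx => hm' ▸ entry_lt hsm hx
  have hmmE : ∀ x ∈ mm, i ≤ x ∧ x < k + i := by
    intro x hx
    rw [hmmdef, List.mem_map] at hx
    obtain ⟨y, hy, rfl⟩ := hx
    have := hmE y hy
    omega
  have hcE : ∀ x ∈ c, i + k ≤ x ∧ x ≤ n - 1 := by
    intro x hx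
    rw [hcdef, compBlock, List.mem_reverse, List.mem_map] at hx
    obtain ⟨y, hy, rfl⟩ := hx
    have := haE y hy
    omega
  -- sums
  have hsum_a : a.sum = i.choose 2 := by have := hsa.2.2; rwa [ha] at this
  have hsum_m : m.sum = k.choose 2 := by have := hsm.2.2; rwa [hm'] at this
  have hsum_mm : mm.sum = k.choose 2 + k * i := by
    rw [hmmdef, sum_map_add_nat, hsum_m, hm']
  have hsum_c : c.sum + i.choose 2 = i * (n - 1) := by
    have := compBlock_sum (n := n) (a := a) (fun x hx => by have := haE x hx; omega)
    rw [ha, hsum_a] at this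
    rw [hcdef]
    omega
  -- take decomposition
  have hgt : ∀ r, (a ++ mm ++ c).take r = a.take r ++ mm.take (r - i) ++ c.take (r - i - k) := by
    intro r
    rw [List.take_append, List.take_append,
      List.length_append, ha, hmm_len, Nat.sub_sub]
  have htake_a : a.take i = a := List.take_of_length_le (le_of_eq ha)
  -- sorted
  have hg_sorted : (a ++ mm ++ c).Pairwise (· ≤ ·) := by
    rw [List.pairwise_append, List.pairwise_append]
    refine ⟨⟨hsa.1, ?_, ?_⟩, ?_, ?_⟩
    · rw [hmmdef, List.pairwise_map]
      exact hsm.1.imp (fun h => by omega)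
    · intro x hx y hy
      have := haE x hx
      have := (hmmE y hy).1
      omega
    · rw [hcdef, compBlock, List.pairwise_reverse, List.pairwise_map]
      exact hsa.1.imp (fun h => by omega)
    · intro x hx y hy
      have hy' := hcE y hy
      rcases List.mem_append.1 hx with h | h
      · have := haE x h; omega
      · have := (hmmE x h).2; omega
  -- markers
  have hmark1 : ((a ++ mm ++ c).take i).sum = i.choose 2 := by
    rw [hgt i, Nat.sub_self]
    simp [htake_a, hsum_a]
  have hmark2 : ∀ r, 1 ≤ r → r < i → r.choose 2 < ((a ++ mm ++ c).take r).sum := by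
    intro r hr1 hr2
    rw [hgt r]
    have e1 : r - i = 0 := by omega
    simp [e1]
    have := hsa.2.1 r hr1 (by omega)
    simp at this ⊢
    omega
  -- score property
  have hg_score : IsScoreSeq (a ++ mm ++ c) := by
    refine ⟨hg_sorted, ?_, ?_⟩
    · intro r hr1 hr2
      rw [hg_len] at hr2
      rw [hgt r, List.sum_append, List.sum_append]
      rcases le_or_gt r i with hri | hri
      · have e1 : r - i = 0 := by omega
        rw [e1]
        simp only [Nat.zero_sub, List.take_zero, List.sum_nil, add_zero]
        rcases eq_or_lt_of_le hri with h | h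
        · subst h
          rw [htake_a, hsum_a]
        · exact le_of_lt (hsa.2.1 r hr1 (by omega))
      · rcases le_or_gt r (i + k) with hrk | hrk
        · -- middle zone
          obtain ⟨t, rfl⟩ : ∃ t, r = i + t := ⟨r - i, by omega⟩
          have ht1 : 1 ≤ t := by omega
          have ht2 : t ≤ k := by omega
          have e1 : i + t - i = t := by omega
          rw [e1, show t - k = 0 from by omega]
          simp only [List.take_zero, List.sum_nil, add_zero]
          rw [List.take_of_length_le (by omega : a.length ≤ i + t), hsum_a]
          have hmt : (mm.take t).sum = (m.take t).sum + t * i := by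
            rw [hmmdef, ← List.map_take, sum_map_add_nat, List.length_take, hm',
              Nat.min_eq_left ht2]
          have hms : t.choose 2 ≤ (m.take t).sum := by
            rcases eq_or_lt_of_le ht2 with h | h
            · subst h
              rw [List.take_of_length_le (le_of_eq hm'), hsum_m]
            · exact hsm.2.1 t ht1 (by omega)
          have hch := choose_two_add i t
          rw [hmt, hch]
          nlinarith [hms]
        · -- last zone
          obtain ⟨s, rfl⟩ : ∃ s, r = i + k + s := ⟨r - i - k, by omega⟩
          have hs1 : 1 ≤ s := by omega
          have hs2 : s < i := by omega
          obtain ⟨u, rfl⟩ : ∃ u, i = s + u := ⟨i - s, by omega⟩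
          have hu1 : 1 ≤ u := by omega
          have e1 : s + u + k + s - (s + u) = k + s := by omega
          rw [e1, show k + s - k = s from by omega]
          rw [List.take_of_length_le (by omega : a.length ≤ s + u + k + s),
            List.take_of_length_le (by omega : mm.length ≤ k + s), hsum_a, hsum_mm]
          -- compute (c.take s).sum pieces
          have p1 : (c.take s).sum + ((a.map (fun x => n - 1 - x)).take u).sum
              = (a.map (fun x => n - 1 - x)).sum := by
            have hcrev : c.take s = ((a.map (fun x => n - 1 - x)).drop u).reverse := by
              rw [hcdef, compBlock, List.take_reverse, List.length_map, ha]
              congr 2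
              omega
            rw [hcrev, List.sum_reverse]
            have := List.sum_take_add_sum_drop (a.map (fun x => n - 1 - x)) u
            omega
          have p2 : ((a.map (fun x => n - 1 - x)).take u).sum + (a.take u).sum
              = u * (n - 1) := by
            rw [← List.map_take]
            have := sum_map_sub_nat (a := a.take u) (c := n - 1)
              (fun x hx => by have := haE x ((a.take_sublist u).mem hx); omega)
            rw [List.length_take, ha, Nat.min_eq_left (by omega)] at this
            exact this
          have p3 : (a.map (fun x => n - 1 - x)).sum + (s + u).choose 2
              = (s + u) * (n - 1) := by
            have := sum_map_sub_nat (a := a) (c := n - 1)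
              (fun x hx => by have := haE x hx; omega)
            rw [ha, hsum_a] at this
            omega
          have p4 : u.choose 2 ≤ (a.take u).sum := by
            rcases eq_or_lt_of_le (show u ≤ s + u by omega) with h | h
            · have : s = 0 := by omega
              omega
            · exact le_of_lt (hsa.2.1 u (by omega) (by omega))
          exact arith_case3 s u k (n - 1) _ _ _ _ p1 p2 p3 p4 hw
    · rw [hg_len, List.sum_append, List.sum_append, hsum_a, hsum_mm, hk]
      exact arith_total i k (n - 1) _ hw hsum_c
  -- getD helpers
  have hga : ∀ p, p < i → (a ++ mm ++ c).getD p 0 = a.getD p 0 := by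
    intro p hp
    exact getD_append3_left (by omega)
  have hgm : ∀ p, p < k → (a ++ mm ++ c).getD (i + p) 0 = m.getD p 0 + i := by
    intro p hp
    have h0 : i + p = a.length + p := by omega
    rw [h0, getD_append3_mid (by omega), hmmdef, getD_map_add (by omega)]
  have hgc : ∀ p, p < i → (a ++ mm ++ c).getD (i + k + p) 0 = n - 1 - a.getD (i - 1 - p) 0 := by
    intro p hp
    have h0 : i + k + p = a.length + mm.length + p := by omega
    rw [h0, getD_append3_right (by omega), hcdef, compBlock_getD (by omega), ha]
  -- self-complementarity
  have hg_compl : IsSelfCompl (a ++ mm ++ c) := by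
    intro i' hi1 hi2
    rw [hg_len] at hi2 ⊢
    have hn2 : n / 2 = i + k / 2 := by omega
    rcases le_or_gt i' i with hii | hii
    · have e1 : n - i' = i + k + (i - i') := by omega
      rw [e1, hgc (i - i') (by omega)]
      rw [show i - 1 - (i - i') = i' - 1 from by omega]
      rw [hga (i' - 1) (by omega)]
      have hlt : a.getD (i' - 1) 0 < i := by
        have := getD_lt (strong_isScore hsa) (show i' - 1 < a.length by omega)
        omega
      omega
    · have hj1 : 1 ≤ i' - i := by omega
      have hj2 : i' - i ≤ k / 2 := by omega
      have e1 : n - i' = i + (k - (i' - i)) := by omega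
      have e2 : i' - 1 = i + (i' - i - 1) := by omega
      rw [e1, hgm (k - (i' - i)) (by omega), e2, hgm (i' - i - 1) (by omega)]
      have hcm' := hcm (i' - i) hj1 (by omega)
      rw [hm'] at hcm'
      push_cast
      omega
  rw [hglue]
  exact ⟨hg_len, hg_score, hg_compl, hmark1, hmark2⟩

-- part f: arithmetic lemmas for forward direction
lemma arith_half (i e w T : ℕ) (hw : w + 1 = i + e)
    (h : i.choose 2 + e * w = (i + e).choose 2 + T) : T = e.choose 2 := by
  have c1 := choose_two_add i e
  have c2 := two_mul_choose_two e
  have h3 : e * (w + 1) = e * (i + e) := by rw [hw]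
  ring_nf at h3
  nlinarith [h3]

lemma arith_msum (i k w S M : ℕ) (hw : w + 1 = 2 * i + k)
    (h1 : M + k * i = S) (h2 : i.choose 2 + S + i * w = (2 * i + k).choose 2 + i.choose 2) :
    M = k.choose 2 := by
  have c0 : 2 * i + k = (i + k) + i := by ring
  rw [c0] at h2
  have c1 := choose_two_add (i + k) i
  have c2 := choose_two_add i k
  have c3 := two_mul_choose_two i
  have h3 : i * (w + 1) = i * ((i + k) + i) := by rw [hw]; ring_nf
  ring_nf at h3
  nlinarith [h3]

-- part g: forward decomposition
set_option maxHeartbeats 2000000 in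
lemma decomp {n : ℕ} {l : List ℕ} (hlen : l.length = n) (hsc : IsScoreSeq l)
    (hcl : IsSelfCompl l) (hns : ¬ IsStrongScoreSeq l) :
    ∃ i, 1 ≤ i ∧ 2 * i ≤ n ∧ ∃ a m, a.length = i ∧ IsStrongScoreSeq a ∧
      m.length = n - 2 * i ∧ IsScoreSeq m ∧ IsSelfCompl m ∧ glue n i (a, m) = l := by
  classical
  have hex : ∃ r, 1 ≤ r ∧ r < n ∧ (l.take r).sum = r.choose 2 := by
    by_contra hno
    push_neg at hno
    apply hns
    refine ⟨hsc.1, ?_, hsc.2.2⟩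
    intro r h1 h2
    have hge := hsc.2.1 r h1 h2
    rcases eq_or_lt_of_le hge with h | h
    · exact absurd h.symm (hno r h1 (by omega))
    · exact h
  obtain ⟨i, ⟨hi1, hin, hieq⟩, himin⟩ :
      ∃ i, (1 ≤ i ∧ i < n ∧ (l.take i).sum = i.choose 2) ∧
        ∀ r, r < i → ¬(1 ≤ r ∧ r < n ∧ (l.take r).sum = r.choose 2) :=
    ⟨Nat.find hex, Nat.find_spec hex, fun r hr => Nat.find_min hex hr⟩
  have hEl : ∀ x ∈ l, x < n := fun x hx => hlen ▸ entry_lt hsc hx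
  have h2i : 2 * i ≤ n := by
    by_contra hlt
    push_neg at hlt
    apply himin (n - i) (by omega)
    refine ⟨by omega, by omega, ?_⟩
    have hstc := sum_take_compl hsc hcl (t := n - i) (by omega)
    rw [hlen] at hstc
    rw [show n - (n - i) = i from by omega, hieq, hsc.2.2, hlen] at hstc
    obtain ⟨e, he⟩ : ∃ e, n = i + e := ⟨n - i, by omega⟩
    rw [show n - i = e from by omega] at hstc ⊢
    obtain ⟨w, hwe⟩ : ∃ w, w + 1 = i + e := ⟨n - 1, by omega⟩
    rw [show n - 1 = w from by omega, show n.choose 2 = (i + e).choose 2 from by rw [he]]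
      at hstc
    exact arith_half i e w _ hwe (by omega)
  obtain ⟨k, hkdef⟩ : ∃ k, n = 2 * i + k := ⟨n - 2 * i, by omega⟩
  have ha_len : (l.take i).length = i := by rw [List.length_take]; omega
  have hmm'_len : ((l.drop i).take k).length = k := by
    rw [List.length_take, List.length_drop]; omega
  have hm_len : (((l.drop i).take k).map (fun x => x - i)).length = k := by
    rw [List.length_map, hmm'_len]
  -- the complement identity
  have hdc : l.drop (n - i) = compBlock n (l.take i) := by
    have := drop_compBlock hsc hcl (t := i) (by rw [hlen]; omega)
    rwa [hlen] at this
  -- split of l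
  have hsplit : l = l.take i ++ (l.drop i).take k ++ l.drop (i + k) := by
    have h1 : (l.drop i).take k ++ l.drop (i + k) = l.drop i := by
      rw [← List.drop_drop]
      exact List.take_append_drop k (l.drop i)
    rw [List.append_assoc, h1]
    exact (List.take_append_drop i l).symm
  -- middle entries are at least i
  have hge_mid : ∀ p, p < k → i ≤ l.getD (i + p) 0 := by
    intro p hp
    have h0 : i ≤ l.getD i 0 := by
      have hs := hsc.2.1 (i + 1) (by omega) (by omega)
      have hss := List.sum_take_succ l i (by omega)
      have hch := choose_two_add i 1
      simp [Nat.choose_one_right] at hch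
      rw [List.getD_eq_getElem l 0 (by omega)]
      omega
    exact le_trans h0 (sorted_getD_le hsc.1 (by omega) (by omega))
  have hlt_all : ∀ p, p < n → l.getD p 0 < n := fun p hp => hlen ▸ getD_lt hsc (by omega)
  -- mm' entries
  have hmm'getD : ∀ p, p < k → ((l.drop i).take k).getD p 0 = l.getD (i + p) 0 := by
    intro p hp
    rw [List.getD_eq_getElem _ 0 (by rw [hmm'_len]; omega),
      List.getElem_take, List.getElem_drop, List.getD_eq_getElem l 0 (by omega)]
  have hmm'E : ∀ x ∈ (l.drop i).take k, i ≤ x := by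
    intro x hx
    obtain ⟨p, hp, rfl⟩ := List.mem_iff_getElem.1 hx
    have hp' : p < k := by omega
    have h2 := hge_mid p hp'
    rw [← List.getD_eq_getElem _ 0 hp, hmm'getD p hp',
      List.getD_eq_getElem l 0 (by omega)]
    rwa [List.getD_eq_getElem l 0 (by omega)] at h2
  have hmap_back : (((l.drop i).take k).map (fun x => x - i)).map (· + i)
      = (l.drop i).take k := by
    rw [List.map_map]
    have h1 : ((l.drop i).take k).map ((· + i) ∘ fun x => x - i)
        = ((l.drop i).take k).map id :=
      List.map_congr_left (fun x hx => by have := hmm'E x hx; simp; omega)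
    rw [h1, List.map_id]
  -- a is a strong score sequence
  have hsa : IsStrongScoreSeq (l.take i) := by
    refine ⟨List.Pairwise.sublist (List.take_sublist i l) hsc.1, ?_, ?_⟩
    · intro r h1 h2
      rw [ha_len] at h2
      rw [List.take_take, Nat.min_eq_left (by omega : r ≤ i)]
      have hge := hsc.2.1 r h1 (by omega)
      rcases eq_or_lt_of_le hge with h | h
      · exact absurd ⟨h1, by omega, h.symm⟩ (himin r h2)
      · exact h
    · rw [ha_len]
      exact hieq
  -- m take sums
  have hmtake : ∀ r, r ≤ k →
      (((((l.drop i).take k).map (fun x => x - i))).take r).sum + r * i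
        = (((l.drop i).take k).take r).sum := by
    intro r hr
    rw [← List.map_take]
    have := sum_map_sub_nat' (a := ((l.drop i).take k).take r) (c := i)
      (fun x hx => hmm'E x ((((l.drop i).take k).take_sublist r).mem hx))
    rwa [List.length_take, hmm'_len, Nat.min_eq_left hr] at this
  have hmm'take : ∀ r, r ≤ k →
      (l.take (i + r)).sum = i.choose 2 + ((((l.drop i).take k)).take r).sum := by
    intro r hr
    rw [List.take_add, List.sum_append, List.take_take, Nat.min_eq_left hr, hieq]
  -- m is a score sequence
  have hsm : IsScoreSeq (((l.drop i).take k).map (fun x => x - i)) := by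
    refine ⟨?_, ?_, ?_⟩
    · rw [List.pairwise_map]
      exact (List.Pairwise.sublist ((List.take_sublist k (l.drop i)).trans
        (l.drop_sublist i)) hsc.1).imp (fun h => by omega)
    · intro r h1 h2
      rw [hm_len] at h2
      have hs := hsc.2.1 (i + r) (by omega) (by omega)
      rw [hmm'take r (by omega)] at hs
      have hmt := hmtake r (by omega)
      have hch := choose_two_add i r
      nlinarith [hs, hmt, hch]
    · rw [hm_len]
      have hstc := sum_take_compl hsc hcl (t := i) (by rw [hlen]; omega)
      rw [hlen, hsc.2.2, hlen, hieq] at hstc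
      have h2 := hmm'take k (le_refl k)
      rw [show i + k = n - i from by omega] at h2
      have h3 := hmtake k (le_refl k)
      rw [List.take_of_length_le (le_of_eq hmm'_len)] at h2 h3
      rw [List.take_of_length_le (le_of_eq hm_len)] at h3
      obtain ⟨w, hwe⟩ : ∃ w, w + 1 = 2 * i + k := ⟨n - 1, by omega⟩
      rw [show n - 1 = w from by omega] at hstc
      refine arith_msum i k w (((l.drop i).take k).sum)
        ((((l.drop i).take k).map (fun x => x - i)).sum) hwe h3 ?_
      rw [show (2 * i + k).choose 2 = n.choose 2 from by rw [← hkdef]]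
      omega
  -- m getD
  have hmgetD : ∀ p, p < k →
      (((l.drop i).take k).map (fun x => x - i)).getD p 0 = l.getD (i + p) 0 - i := by
    intro p hp
    rw [List.getD_eq_getElem _ 0 (by rw [hm_len]; omega),
      List.getElem_map, ← List.getD_eq_getElem ((l.drop i).take k) 0 (by omega),
      hmm'getD p hp]
  -- m self-complementary
  have hcm : IsSelfCompl (((l.drop i).take k).map (fun x => x - i)) := by
    intro j hj1 hj2
    rw [hm_len] at hj2 ⊢
    have hcl' := hcl (i + j) (by omega) (by rw [hlen]; omega)
    rw [hlen] at hcl'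
    rw [show n - (i + j) = i + (k - j) from by omega,
      show i + j - 1 = i + (j - 1) from by omega] at hcl'
    rw [hmgetD (k - j) (by omega), hmgetD (j - 1) (by omega)]
    have hb1 := hge_mid (k - j) (by omega)
    have hb2 := hge_mid (j - 1) (by omega)
    have hb3 := hlt_all (i + (k - j)) (by omega)
    have hb4 := hlt_all (i + (j - 1)) (by omega)
    omega
  refine ⟨i, hi1, h2i, l.take i, ((l.drop i).take k).map (fun x => x - i),
    ha_len, hsa, by omega, hsm, hcm, ?_⟩
  show l.take i ++ (((l.drop i).take k).map (fun x => x - i)).map (· + i)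
      ++ compBlock n (l.take i) = l
  rw [hmap_back, ← hdc, show n - i = i + k from by omega]
  exact hsplit.symm

-- part h: gluing properties for counting
lemma glue_take_i {n i : ℕ} {a m : List ℕ} (ha : a.length = i) :
    (glue n i (a, m)).take i = a := by
  show (a ++ m.map (· + i) ++ compBlock n a).take i = a
  rw [List.append_assoc]
  exact List.take_left' ha

lemma glue_injOn {n i : ℕ} :
    Set.InjOn (glue n i) ({l : List ℕ | l.length = i ∧ IsStrongScoreSeq l} ×ˢ
      {l : List ℕ | l.length = n - 2 * i ∧ IsScoreSeq l ∧ IsSelfCompl l}) := by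
  rintro ⟨a, m⟩ ⟨⟨ha, -⟩, ⟨hm, -⟩⟩ ⟨a', m'⟩ ⟨⟨ha', -⟩, ⟨hm', -⟩⟩ heq
  have haa : a = a' := by
    have h1 := congrArg (List.take i) heq
    rwa [glue_take_i ha, glue_take_i ha'] at h1
  subst haa
  have h2 : m.map (· + i) ++ compBlock n a = m'.map (· + i) ++ compBlock n a := by
    have := heq
    show _ 
    unfold glue at this
    simp only at this
    rw [List.append_assoc, List.append_assoc] at this
    exact List.append_cancel_left this
  have h3 : m.map (· + i) = m'.map (· + i) := by
    have h4 := congrArg (List.take (n - 2 * i)) h2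
    rw [List.take_left' (by simp [hm]), List.take_left' (by simp [hm'])] at h4
    exact h4
  have h5 : m = m' := List.map_injective_iff.2 (fun x y h => by omega) h3
  rw [h5]

-- membership spec of the glued image
lemma F_spec {n i : ℕ} (h1 : 1 ≤ i) (h2 : 2 * i ≤ n) {x : List ℕ}
    (hx : x ∈ glue n i '' (({l : List ℕ | l.length = i ∧ IsStrongScoreSeq l} ×ˢ
      {l : List ℕ | l.length = n - 2 * i ∧ IsScoreSeq l ∧ IsSelfCompl l}))) :
    (x.length = n ∧ IsScoreSeq x ∧ IsSelfCompl x) ∧ (x.take i).sum = i.choose 2 ∧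
      (∀ r, 1 ≤ r → r < i → r.choose 2 < (x.take r).sum) := by
  obtain ⟨⟨a, m⟩, ⟨⟨ha1, ha2⟩, ⟨hm1, hm2, hm3⟩⟩, rfl⟩ := hx
  obtain ⟨g1, g2, g3, g4, g5⟩ := glue_spec h1 h2 ha1 ha2 hm1 hm2 hm3
  exact ⟨⟨g1, g2, g3⟩, g4, g5⟩

end SSCSAux

/-- `SS n` is the number of distinct strong score sequences of length `n`. -/
noncomputable def SS (n : ℕ) : ℕ :=
  {l : List ℕ | l.length = n ∧ IsStrongScoreSeq l}.ncard

/-- `SCS n` is the number of distinct self-complementary score sequences of length `n`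
(with `SCS 0 = 1` and `SCS 1 = 1`). -/
noncomputable def SCS (n : ℕ) : ℕ :=
  {l : List ℕ | l.length = n ∧ IsScoreSeq l ∧ IsSelfCompl l}.ncard

/-- `SSCS n` is the number of distinct score sequences of length `n` that are both strong
and self-complementary. -/
noncomputable def SSCS (n : ℕ) : ℕ :=
  {l : List ℕ | l.length = n ∧ IsStrongScoreSeq l ∧ IsSelfCompl l}.ncard

open SSCSAux in
/-- `SSCS(n) = SCS(n) - ∑_{i=1}^{⌊n/2⌋} SS(i)·SCS(n-2i)` for `n ≥ 1`. -/
theorem SSCS_recurrence (n : ℕ) (hn : 1 ≤ n) :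
    (SSCS n : ℤ) =
      (SCS n : ℤ) - ∑ i ∈ Finset.Icc 1 (n / 2), (SS i : ℤ) * (SCS (n - 2 * i) : ℤ) := by
  classical
  have hA_fin : ∀ i, ({l : List ℕ | l.length = i ∧ IsStrongScoreSeq l}).Finite :=
    fun i => (finite_score i).subset (fun l ⟨h1, h2⟩ => ⟨h1, strong_isScore h2⟩)
  have hB_fin : ∀ j, ({l : List ℕ | l.length = j ∧ IsScoreSeq l ∧ IsSelfCompl l}).Finite :=
    fun j => (finite_score j).subset (fun l ⟨h1, h2, _⟩ => ⟨h1, h2⟩)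
  have hT_fin : ({l : List ℕ | l.length = n ∧ IsStrongScoreSeq l ∧ IsSelfCompl l}).Finite :=
    (finite_score n).subset (fun l ⟨h1, h2, _⟩ => ⟨h1, strong_isScore h2⟩)
  have hTS : {l : List ℕ | l.length = n ∧ IsStrongScoreSeq l ∧ IsSelfCompl l} ⊆
      {l : List ℕ | l.length = n ∧ IsScoreSeq l ∧ IsSelfCompl l} :=
    fun l ⟨h1, h2, h3⟩ => ⟨h1, strong_isScore h2, h3⟩
  -- the union decomposition
  have hcover : {l : List ℕ | l.length = n ∧ IsScoreSeq l ∧ IsSelfCompl l} \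
      {l : List ℕ | l.length = n ∧ IsStrongScoreSeq l ∧ IsSelfCompl l}
      = ⋃ i ∈ Finset.Icc 1 (n / 2), glue n i ''
          (({l : List ℕ | l.length = i ∧ IsStrongScoreSeq l} ×ˢ
            {l : List ℕ | l.length = n - 2 * i ∧ IsScoreSeq l ∧ IsSelfCompl l})) := by
    ext x
    constructor
    · rintro ⟨⟨hl, hsc, hcl⟩, hnT⟩
      have hns : ¬ IsStrongScoreSeq x := fun h => hnT ⟨hl, h, hcl⟩
      obtain ⟨i, h1, h2, a, m, ha1, ha2, hm1, hm2, hm3, hglue⟩ := decomp hl hsc hcl hns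
      refine Set.mem_biUnion (show i ∈ Finset.Icc 1 (n / 2) from ?_) ?_
      · rw [Finset.mem_Icc]; omega
      · exact ⟨(a, m), ⟨⟨ha1, ha2⟩, ⟨hm1, hm2, hm3⟩⟩, hglue⟩
    · intro hx
      rw [Set.mem_iUnion₂] at hx
      obtain ⟨i, hi, hxF⟩ := hx
      rw [Finset.mem_Icc] at hi
      have h2 : 2 * i ≤ n := by omega
      obtain ⟨⟨hl, hsc, hcl⟩, hmark, hstrict⟩ := F_spec hi.1 h2 hxF
      refine ⟨⟨hl, hsc, hcl⟩, ?_⟩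
      rintro ⟨-, hstrong, -⟩
      have := hstrong.2.1 i hi.1 (by rw [hl]; omega)
      omega
  -- disjointness
  have hdisj : ∀ i ∈ Finset.Icc 1 (n / 2), ∀ j ∈ Finset.Icc 1 (n / 2), i ≠ j →
      Disjoint (glue n i '' (({l : List ℕ | l.length = i ∧ IsStrongScoreSeq l} ×ˢ
          {l : List ℕ | l.length = n - 2 * i ∧ IsScoreSeq l ∧ IsSelfCompl l})))
        (glue n j '' (({l : List ℕ | l.length = j ∧ IsStrongScoreSeq l} ×ˢ
          {l : List ℕ | l.length = n - 2 * j ∧ IsScoreSeq l ∧ IsSelfCompl l}))) := by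
    intro i hi j hj hij
    rw [Finset.mem_Icc] at hi hj
    rw [Set.disjoint_left]
    intro x hxi hxj
    obtain ⟨-, hmi, hsi⟩ := F_spec hi.1 (by omega) hxi
    obtain ⟨-, hmj, hsj⟩ := F_spec hj.1 (by omega) hxj
    rcases lt_or_gt_of_ne hij with h | h
    · have := hsj i hi.1 h
      omega
    · have := hsi j hj.1 h
      omega
  have hF_fin : ∀ i ∈ Finset.Icc 1 (n / 2),
      (glue n i '' (({l : List ℕ | l.length = i ∧ IsStrongScoreSeq l} ×ˢ
        {l : List ℕ | l.length = n - 2 * i ∧ IsScoreSeq l ∧ IsSelfCompl l}))).Finite :=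
    fun i _ => ((hA_fin i).prod (hB_fin _)).image _
  have hcard : ({l : List ℕ | l.length = n ∧ IsScoreSeq l ∧ IsSelfCompl l} \
      {l : List ℕ | l.length = n ∧ IsStrongScoreSeq l ∧ IsSelfCompl l}).ncard
      = ∑ i ∈ Finset.Icc 1 (n / 2), SS i * SCS (n - 2 * i) := by
    rw [hcover, ncard_biUnion _ _ hF_fin hdisj]
    apply Finset.sum_congr rfl
    intro i _
    rw [Set.ncard_image_of_injOn glue_injOn, ncard_prod (hA_fin i) (hB_fin _)]
    rfl
  have h0 := Set.ncard_diff_add_ncard_of_subset hTS (hB_fin n)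
  have hfinal : SCS n = SSCS n + ∑ i ∈ Finset.Icc 1 (n / 2), SS i * SCS (n - 2 * i) := by
    rw [show SCS n = ({l : List ℕ | l.length = n ∧ IsScoreSeq l ∧ IsSelfCompl l}).ncard from rfl,
      ← h0, hcard]
    rw [show SSCS n = ({l : List ℕ | l.length = n ∧ IsStrongScoreSeq l ∧ IsSelfCompl l}).ncard
      from rfl]
    ring
  rw [hfinal]
  push_cast
  ring
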